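/- Fix reals α, β, γ, λ, μ > 0 and set κ = λ+α+β. For the seven-state Markov-machine chain (defined in the context), let π be a probability vector satisfying the balance equations Σ_s π_s Q_{s,s'} = 0 for all states s'. Then the false acceptance ratio satisfies FAR := π_{(1,0)}/(π_{(1,0)} + π_{(0,0)}) = α/(μ+κ). -/
import Mathlib


/-- The generator matrix of the seven-state Markov-machine chain, with states indexed
0=(0,0), 1=(1,0), 2=(0,1), 3=(1,1), 4=(0,2), 5=(1,2), 6=(2,2). -/
noncomputable def mmGen7 (α β γ lam μ : ℝ) : Matrix (Fin 7) (Fin 7) ℝ :=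
  !![-(α + lam), α,              0,        0,  0,        0,        lam;
     β,          -(β + μ + lam), 0,        μ + lam, 0,   0,        0;
     μ,          0,              -(α + μ), α,  0,        0,        0;
     0,          0,              β,        -β, 0,        0,        0;
     μ,          0,              0,        0,  -(α + μ), α,        0;
     0,          0,              0,        μ,  β,        -(β + μ), 0;
     0,          0,              0,        0,  γ,        0,        -γ]

/-- For the seven-state Markov-machine chain, if π is a stationary
probability vector, then FAR = π_{(1,0)}/(π_{(1,0)} + π_{(0,0)}) = α/(μ+κ). -/
theorem far_closed_form
    (α β γ lam μ : ℝ) (hα : 0 < α) (hβ : 0 < β) (hγ : 0 < γ)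
    (hlam : 0 < lam) (hμ : 0 < μ)
    (κ : ℝ) (hκ : κ = lam + α + β)
    (π : Fin 7 → ℝ) (hπnn : ∀ s, 0 ≤ π s) (hπsum : ∑ s, π s = 1)
    (hbal : ∀ j, ∑ i, π i * mmGen7 α β γ lam μ i j = 0) :
    π 1 / (π 1 + π 0) = α / (μ + κ) := by
  have h0 := hbal 0
  have h1 := hbal 1
  have h2 := hbal 2
  have h4 := hbal 4
  simp only [mmGen7, Fin.sum_univ_seven,
    show (2:Fin 7) = (0:Fin 5).succ.succ from rfl,
    show (3:Fin 7) = (0:Fin 4).succ.succ.succ from rfl,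
    show (4:Fin 7) = (0:Fin 3).succ.succ.succ.succ from rfl,
    show (5:Fin 7) = (0:Fin 2).succ.succ.succ.succ.succ from rfl,
    show (6:Fin 7) = (0:Fin 1).succ.succ.succ.succ.succ.succ from rfl,
    Matrix.cons_val_succ, Matrix.cons_val_zero, Matrix.cons_val_one,
    Matrix.cons_val', Matrix.cons_val_fin_one, Matrix.head_cons, Matrix.head_fin_const,
    Matrix.empty_val', Matrix.of_apply] at h0 h1 h2 h4
  rw [show (0:Fin 5).succ.succ = (2:Fin 7) from rfl,
    show (0:Fin 4).succ.succ.succ = (3:Fin 7) from rfl,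
    show (0:Fin 3).succ.succ.succ.succ = (4:Fin 7) from rfl,
    show (0:Fin 2).succ.succ.succ.succ.succ = (5:Fin 7) from rfl,
    show (0:Fin 1).succ.succ.succ.succ.succ.succ = (6:Fin 7) from rfl] at h0 h1 h2 h4
  have key : π 0 * α = π 1 * (β + μ + lam) := by linarith
  have hπ1 : 0 < π 1 := by
    rcases lt_or_eq_of_le (hπnn 1) with h | h
    · exact h
    · exfalso
      have e1 : π 1 = 0 := h.symm
      have e0 : π 0 = 0 := by nlinarith [hπnn 0, key]
      have e2 : π 2 = 0 := by nlinarith [hπnn 2, hπnn 4]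
      have e4 : π 4 = 0 := by nlinarith [hπnn 2, hπnn 4]
      have e3 : π 3 = 0 := by nlinarith [hπnn 3]
      have e5 : π 5 = 0 := by nlinarith [hπnn 5, hπnn 6]
      have e6 : π 6 = 0 := by nlinarith [hπnn 5, hπnn 6]
      rw [Fin.sum_univ_seven, e0, e1, e2, e3, e4, e5, e6] at hπsum
      norm_num at hπsum
  clear hbal h0 h2 h4
  have hmk : 0 < μ + κ := by rw [hκ]; linarith
  have hsum : 0 < π 1 + π 0 := by have := hπnn 0; linarith
  rw [div_eq_div_iff hsum.ne' hmk.ne', hκ]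
  linear_combination -key
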